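/- arXiv:1007.5094 — 2 statements merged into one kernel-verified Lean document; each statement's English description precedes it below -/
import Mathlib

section
/- The product of Stochastic Reo automata is commutative up to the equivalence ∼ on Stochastic Reo automata, where (A₁, r₁, t₁) ∼ (A₂, r₂, t₂) iff A₁ ∼ A₂ (bisimilar Reo automata), r₁ = r₂, and t₁ = t₂ (up to the bisimulation pairing). -/
/-- Guards of the free Boolean algebra over the node set `N`, represented
semantically as sets of truth assignments (atoms correspond to assignments). -/
abbrev Guard (N : Type) := Set (N → Bool)

/-- The conjunction `∧f` of a finite set `f` of nodes. -/
def conjNodes {N : Type} (f : Finset N) : Guard N := {v | ∀ x ∈ f, v x = true}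

/-- Transition relations of a Reo automaton: `δ q g f q'` means `q --g|f--> q'`. -/
abbrev TransRel (N Q : Type) := Q → Guard N → Finset N → Q → Prop

/-- Reactivity: every transition `q --g|f--> q'` satisfies `g ≤ ∧f`. -/
def Reactive {N Q : Type} (δ : TransRel N Q) : Prop :=
  ∀ q g f q', δ q g f q' → g ⊆ conjNodes f

/-- The blocking guard `q^♯ = ¬⋁{g | q --g|f--> q' ∈ δ}`. -/
def blk {N Q : Type} (δ : TransRel N Q) (q : Q) : Guard N :=
  (⋃ g ∈ {g | ∃ f q', δ q g f q'}, g)ᶜ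

/-- The product of two Reo automata (on states `Q₁ × Q₂`). -/
def prodTrans {N Q₁ Q₂ : Type} [DecidableEq N]
    (δ₁ : TransRel N Q₁) (δ₂ : TransRel N Q₂) : TransRel N (Q₁ × Q₂) :=
  fun x g f x' =>
    (∃ g₁ f₁ g₂ f₂, δ₁ x.1 g₁ f₁ x'.1 ∧ δ₂ x.2 g₂ f₂ x'.2 ∧
        g = g₁ ∩ g₂ ∧ f = f₁ ∪ f₂) ∨
    (x'.2 = x.2 ∧ ∃ g₁, δ₁ x.1 g₁ f x'.1 ∧ g = g₁ ∩ blk δ₂ x.2) ∨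
    (x'.1 = x.1 ∧ ∃ g₂, δ₂ x.2 g₂ f x'.2 ∧ g = g₂ ∩ blk δ₁ x.1)

/-- Bisimulations between Reo automata, where atoms are truth assignments `v`. -/
def IsBisim {N Q₁ Q₂ : Type} (δ₁ : TransRel N Q₁) (δ₂ : TransRel N Q₂)
    (R : Q₁ → Q₂ → Prop) : Prop :=
  ∀ q₁ q₂, R q₁ q₂ →
    (∀ g f q₁', δ₁ q₁ g f q₁' → ∀ v ∈ g,
        ∃ g' q₂', δ₂ q₂ g' f q₂' ∧ v ∈ g' ∧ R q₁' q₂') ∧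
    (∀ g f q₂', δ₂ q₂ g f q₂' → ∀ v ∈ g,
        ∃ g' q₁', δ₁ q₁ g' f q₁' ∧ v ∈ g' ∧ R q₁' q₂')

/-- `A₁ ∼ A₂`: a bisimulation relating every state of each automaton
to some state of the other. -/
def Bisimilar {N Q₁ Q₂ : Type} (δ₁ : TransRel N Q₁) (δ₂ : TransRel N Q₂) : Prop :=
  ∃ R, IsBisim δ₁ δ₂ R ∧ (∀ q₁, ∃ q₂, R q₁ q₂) ∧ (∀ q₂, ∃ q₁, R q₁ q₂)

/-- Delay 3-tuples `(I, O, r)` of a Stochastic Reo automaton. -/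
abbrev DelayTuple (N : Type) := Finset N × Finset N × ℝ

/-- Rate functions `t : δ → 2^Θ` of a Stochastic Reo automaton, presented
as functions on all potential transitions. -/
abbrev RateFun (N Q : Type) := Q → Guard N → Finset N → Q → Set (DelayTuple N)

/-- The rate function of the product of two Stochastic Reo automata:
the union `t₁(m₁) ∪ t₂(m₂)` on joint transitions, and the original value
on independent transitions. -/
def prodRateFun {N Q₁ Q₂ : Type} [DecidableEq N]
    (δ₁ : TransRel N Q₁) (δ₂ : TransRel N Q₂)
    (t₁ : RateFun N Q₁) (t₂ : RateFun N Q₂) : RateFun N (Q₁ × Q₂) :=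
  fun x g f x' =>
    {θ | ∃ g₁ f₁ g₂ f₂, δ₁ x.1 g₁ f₁ x'.1 ∧ δ₂ x.2 g₂ f₂ x'.2 ∧
          g = g₁ ∩ g₂ ∧ f = f₁ ∪ f₂ ∧
          θ ∈ t₁ x.1 g₁ f₁ x'.1 ∪ t₂ x.2 g₂ f₂ x'.2} ∪
    {θ | x'.2 = x.2 ∧ ∃ g₁, δ₁ x.1 g₁ f x'.1 ∧ g = g₁ ∩ blk δ₂ x.2 ∧
          θ ∈ t₁ x.1 g₁ f x'.1} ∪
    {θ | x'.1 = x.1 ∧ ∃ g₂, δ₂ x.2 g₂ f x'.2 ∧ g = g₂ ∩ blk δ₁ x.1 ∧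
          θ ∈ t₂ x.2 g₂ f x'.2}

lemma prodTrans_swap {N Q₁ Q₂ : Type} [DecidableEq N]
    (δ₁ : TransRel N Q₁) (δ₂ : TransRel N Q₂)
    (x x' : Q₁ × Q₂) (g : Guard N) (f : Finset N)
    (h : prodTrans δ₁ δ₂ x g f x') :
    prodTrans δ₂ δ₁ (x.2, x.1) g f (x'.2, x'.1) := by
  rcases h with ⟨g₁, f₁, g₂, f₂, h1, h2, hg, hf⟩ | ⟨he, g₁, h1, hg⟩ | ⟨he, g₂, h2, hg⟩
  · exact Or.inl ⟨g₂, f₂, g₁, f₁, h2, h1, by rw [hg, Set.inter_comm],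
      by rw [hf, Finset.union_comm]⟩
  · exact Or.inr (Or.inr ⟨he, g₁, h1, hg⟩)
  · exact Or.inr (Or.inl ⟨he, g₂, h2, hg⟩)

theorem stmt_aux_bisim {N Q₁ Q₂ : Type} [DecidableEq N]
    (δ₁ : TransRel N Q₁) (δ₂ : TransRel N Q₂) :
    IsBisim (prodTrans δ₁ δ₂) (prodTrans δ₂ δ₁) (fun x y => y = (x.2, x.1)) := by
  intro x y hxy
  subst hxy
  constructor
  · intro g f x' h v hv
    exact ⟨g, (x'.2, x'.1), prodTrans_swap δ₁ δ₂ x x' g f h, hv, rfl⟩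
  · intro g f y' h v hv
    refine ⟨g, (y'.2, y'.1), ?_, hv, rfl⟩
    have := prodTrans_swap δ₂ δ₁ (x.2, x.1) y' g f h
    simpa using this

lemma prodRateFun_swap_sub {N Q₁ Q₂ : Type} [DecidableEq N]
    (δ₁ : TransRel N Q₁) (δ₂ : TransRel N Q₂)
    (t₁ : RateFun N Q₁) (t₂ : RateFun N Q₂)
    (x x' : Q₁ × Q₂) (g : Guard N) (f : Finset N) :
    prodRateFun δ₁ δ₂ t₁ t₂ x g f x' ⊆
      prodRateFun δ₂ δ₁ t₂ t₁ (x.2, x.1) g f (x'.2, x'.1) := by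
  intro θ hθ
  rcases hθ with (⟨g₁, f₁, g₂, f₂, h1, h2, hg, hf, ht⟩ | ⟨he, g₁, h1, hg, ht⟩) |
    ⟨he, g₂, h2, hg, ht⟩
  · exact Or.inl (Or.inl ⟨g₂, f₂, g₁, f₁, h2, h1, by rw [hg, Set.inter_comm],
      by rw [hf, Finset.union_comm], ht.symm⟩)
  · exact Or.inr ⟨he, g₁, h1, hg, ht⟩
  · exact Or.inl (Or.inr ⟨he, g₂, h2, hg, ht⟩)

/-- The product of Stochastic Reo automata is commutative up to the
equivalence `∼`: the underlying Reo automata of `(A₁,r₁,t₁) × (A₂,r₂,t₂)` and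
`(A₂,r₂,t₂) × (A₁,r₁,t₁)` are bisimilar via the swap pairing, the combined
arrival-rate functions `r₁ ∪ r₂` and `r₂ ∪ r₁` coincide on `Σ₁ ∪ Σ₂`, and the
combined rate functions `t` coincide up to the bisimulation pairing. -/
theorem stmt_14 {N Q₁ Q₂ : Type} [DecidableEq N]
    (Sig₁ Sig₂ : Finset N) (hdisj : Disjoint Sig₁ Sig₂)
    (δ₁ : TransRel N Q₁) (δ₂ : TransRel N Q₂)
    (ha₁ : ∀ q g f q', δ₁ q g f q' → f ⊆ Sig₁)
    (ha₂ : ∀ q g f q', δ₂ q g f q' → f ⊆ Sig₂)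
    (r₁ r₂ : N → ℝ) (t₁ : RateFun N Q₁) (t₂ : RateFun N Q₂) :
    IsBisim (prodTrans δ₁ δ₂) (prodTrans δ₂ δ₁) (fun x y => y = (x.2, x.1)) ∧
    Bisimilar (prodTrans δ₁ δ₂) (prodTrans δ₂ δ₁) ∧
    (∀ n ∈ Sig₁ ∪ Sig₂,
      (if n ∈ Sig₁ then r₁ n else r₂ n) = (if n ∈ Sig₂ then r₂ n else r₁ n)) ∧
    (∀ (x x' : Q₁ × Q₂) (g : Guard N) (f : Finset N),
      prodRateFun δ₁ δ₂ t₁ t₂ x g f x' =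
        prodRateFun δ₂ δ₁ t₂ t₁ (x.2, x.1) g f (x'.2, x'.1)) := by
  refine ⟨stmt_aux_bisim δ₁ δ₂, ⟨_, stmt_aux_bisim δ₁ δ₂,
    fun x => ⟨(x.2, x.1), rfl⟩, fun y => ⟨(y.2, y.1), by simp⟩⟩, ?_, ?_⟩
  · intro n hn
    by_cases h1 : n ∈ Sig₁
    · have h2 : n ∉ Sig₂ := Finset.disjoint_left.1 hdisj h1
      simp [h1, h2]
    · have h2 : n ∈ Sig₂ := by
        rcases Finset.mem_union.1 hn with h | h
        · exact absurd h h1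
        · exact h
      simp [h1, h2]
  · intro x x' g f
    exact Set.Subset.antisymm (prodRateFun_swap_sub δ₁ δ₂ t₁ t₂ x x' g f)
      (prodRateFun_swap_sub δ₂ δ₁ t₂ t₁ (x.2, x.1) (x'.2, x'.1) g f)
end

section
/- If R is a bisimulation between Reo automata A₁ and A₂, and both automata are reactive, then bisimilar states agree on which atoms enable some firing: for (q₁,q₂) ∈ R and any atom α, α ≤ q₁^♯ if and only if α ≤ q₂^♯. -/
/-- If `R` is a bisimulation between reactive Reo automata, then bisimilar
states agree on which atoms (truth assignments) enable some firing:
for `(q₁,q₂) ∈ R` and any atom `v`, `v ≤ q₁^♯ ↔ v ≤ q₂^♯`. -/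
theorem stmt_19 {N Q₁ Q₂ : Type} (δ₁ : TransRel N Q₁) (δ₂ : TransRel N Q₂)
    (R : Q₁ → Q₂ → Prop) (hR : IsBisim δ₁ δ₂ R)
    (h₁ : Reactive δ₁) (h₂ : Reactive δ₂)
    (q₁ : Q₁) (q₂ : Q₂) (hq : R q₁ q₂) (v : N → Bool) :
    v ∈ blk δ₁ q₁ ↔ v ∈ blk δ₂ q₂ := by
  obtain ⟨h12, h21⟩ := hR q₁ q₂ hq
  simp only [blk, Set.mem_compl_iff, Set.mem_iUnion, Set.mem_setOf_eq, not_exists]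
  constructor
  · rintro h g ⟨f, q₂', hδ⟩ hv
    obtain ⟨g', q₁', hδ', hv', -⟩ := h21 g f q₂' hδ v hv
    exact h g' ⟨f, q₁', hδ'⟩ hv'
  · rintro h g ⟨f, q₁', hδ⟩ hv
    obtain ⟨g', q₂', hδ', hv', -⟩ := h12 g f q₁' hδ v hv
    exact h g' ⟨f, q₂', hδ'⟩ hv'
end
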